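/- Path gluing step of path coupling: suppose that for any two states s, s' with d(s, s') = 1 there exists a coupling μ of f(s) and f(s') such that E_{(r,r')∼μ}[d(r, r')] ≤ β, where β ≥ 0. Then for any two states s, s' there exists a coupling μ of f(s) and f(s') such that E_{(r,r')∼μ}[d(r, r')] ≤ β · d(s, s'). -/

import Mathlib

open scoped ENNReal

/-- A coupling of `μ₁` and `μ₂` is a distribution on pairs whose marginals are `μ₁` and `μ₂`. -/
def IsCoupling {A B : Type*} (μ : PMF (A × B)) (μ₁ : PMF A) (μ₂ : PMF B) : Prop :=
  μ.map Prod.fst = μ₁ ∧ μ.map Prod.snd = μ₂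

lemma marg_fst {A B : Type*} [Fintype A] [Fintype B] (μ : PMF (A × B)) (a : A) :
    (μ.map Prod.fst) a = ∑ b, μ (a, b) := by
  rw [PMF.map_apply, tsum_fintype, Fintype.sum_prod_type, Finset.sum_eq_single a]
  · simp
  · intro x _ hx; simp [hx, Ne.symm hx]
  · simp

lemma marg_snd {A B : Type*} [Fintype A] [Fintype B] (μ : PMF (A × B)) (b : B) :
    (μ.map Prod.snd) b = ∑ a, μ (a, b) := by
  rw [PMF.map_apply, tsum_fintype, Fintype.sum_prod_type_right, Finset.sum_eq_single b]
  · simp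
  · intro x _ hx; simp [hx, Ne.symm hx]
  · simp

lemma glue_coupling {Ω : Type*} [Fintype Ω] (μa μb μc : PMF Ω)
    (μ₁ μ₂ : PMF (Ω × Ω)) (h₁ : IsCoupling μ₁ μa μb) (h₂ : IsCoupling μ₂ μb μc)
    (D : Ω → Ω → ℝ≥0∞) (hD : ∀ a b c, D a c ≤ D a b + D b c) :
    ∃ μ : PMF (Ω × Ω), IsCoupling μ μa μc ∧
      ∑' p : Ω × Ω, μ p * D p.1 p.2 ≤
        (∑' p : Ω × Ω, μ₁ p * D p.1 p.2) + (∑' p : Ω × Ω, μ₂ p * D p.1 p.2) := by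
  have hs1 : ∀ b, ∑ a, μ₁ (a, b) = μb b := fun b => by rw [← marg_snd, h₁.2]
  have hs2 : ∀ b, ∑ c, μ₂ (b, c) = μb b := fun b => by rw [← marg_fst, h₂.1]
  have hz1 : ∀ a b, μb b = 0 → μ₁ (a, b) = 0 := by
    intro a b hb
    have := Finset.single_le_sum (f := fun a => μ₁ (a, b)) (fun i _ => zero_le)
      (Finset.mem_univ a)
    rw [hs1, hb] at this; exact le_antisymm this zero_le
  have hz2 : ∀ b c, μb b = 0 → μ₂ (b, c) = 0 := by
    intro b c hb
    have := Finset.single_le_sum (f := fun c => μ₂ (b, c)) (fun i _ => zero_le)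
      (Finset.mem_univ c)
    rw [hs2, hb] at this; exact le_antisymm this zero_le
  set g : Ω × Ω → ℝ≥0∞ := fun p => ∑ b, μ₁ (p.1, b) * μ₂ (b, p.2) * (μb b)⁻¹ with hg
  have hgsum : ∑ p : Ω × Ω, g p = 1 := by
    rw [Fintype.sum_prod_type]
    have h0 : ∀ a, ∑ c, g (a, c) = ∑ b, μ₁ (a, b) * ((∑ c, μ₂ (b, c)) * (μb b)⁻¹) := by
      intro a
      rw [Finset.sum_comm]
      refine Finset.sum_congr rfl fun b _ => ?_
      simp only [Finset.sum_mul, Finset.mul_sum]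
      exact Finset.sum_congr rfl fun c _ => by ring
    rw [Finset.sum_congr rfl fun a _ => h0 a, Finset.sum_comm]
    have h1 : ∀ b, ∑ a, μ₁ (a, b) * ((∑ c, μ₂ (b, c)) * (μb b)⁻¹) = μb b := by
      intro b
      rw [← Finset.sum_mul, hs1, hs2]
      by_cases hb : μb b = 0
      · simp [hb]
      · rw [ENNReal.mul_inv_cancel hb (μb.apply_ne_top b), mul_one]
    rw [Finset.sum_congr rfl fun b _ => h1 b]
    rw [← μb.tsum_coe, tsum_fintype]
  have key1 : ∀ a, ∀ h : Ω → ℝ≥0∞, ∑ b, μ₁ (a, b) * h b * ((∑ c, μ₂ (b, c)) * (μb b)⁻¹)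
      = ∑ b, μ₁ (a, b) * h b := by
    intro a h
    refine Finset.sum_congr rfl fun b _ => ?_
    rw [hs2]
    by_cases hb : μb b = 0
    · simp [hz1 a b hb]
    · rw [ENNReal.mul_inv_cancel hb (μb.apply_ne_top b), mul_one]
  have key2 : ∀ c, ∀ h : Ω → ℝ≥0∞, ∑ b, μ₂ (b, c) * h b * ((∑ a, μ₁ (a, b)) * (μb b)⁻¹)
      = ∑ b, μ₂ (b, c) * h b := by
    intro c h
    refine Finset.sum_congr rfl fun b _ => ?_
    rw [hs1]
    by_cases hb : μb b = 0
    · simp [hz2 b c hb]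
    · rw [ENNReal.mul_inv_cancel hb (μb.apply_ne_top b), mul_one]
  refine ⟨PMF.ofFintype g (by rw [← hgsum]), ⟨?_, ?_⟩, ?_⟩
  · ext a
    rw [marg_fst]
    simp only [PMF.ofFintype_apply, hg]
    rw [Finset.sum_comm]
    calc ∑ b, ∑ c, μ₁ (a, b) * μ₂ (b, c) * (μb b)⁻¹
        = ∑ b, μ₁ (a, b) * 1 * ((∑ c, μ₂ (b, c)) * (μb b)⁻¹) := by
          refine Finset.sum_congr rfl fun b _ => ?_
          simp only [Finset.sum_mul, Finset.mul_sum, mul_one]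
          exact Finset.sum_congr rfl fun c _ => by ring
      _ = ∑ b, μ₁ (a, b) * 1 := key1 a 1
      _ = (μ₁.map Prod.fst) a := by rw [marg_fst]; simp
      _ = μa a := by rw [h₁.1]
  · ext c
    rw [marg_snd]
    simp only [PMF.ofFintype_apply, hg]
    rw [Finset.sum_comm]
    calc ∑ b, ∑ a, μ₁ (a, b) * μ₂ (b, c) * (μb b)⁻¹
        = ∑ b, μ₂ (b, c) * 1 * ((∑ a, μ₁ (a, b)) * (μb b)⁻¹) := by
          refine Finset.sum_congr rfl fun b _ => ?_
          simp only [Finset.sum_mul, Finset.mul_sum, mul_one]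
          exact Finset.sum_congr rfl fun a _ => by ring
      _ = ∑ b, μ₂ (b, c) * 1 := key2 c 1
      _ = (μ₂.map Prod.snd) c := by rw [marg_snd]; simp
      _ = μc c := by rw [h₂.2]
  · rw [tsum_fintype, tsum_fintype, tsum_fintype]
    simp only [PMF.ofFintype_apply, hg]
    have hT1 : ∑ p : Ω × Ω, ∑ b, μ₁ (p.1, b) * D p.1 b * (μ₂ (b, p.2) * (μb b)⁻¹)
        = ∑ p : Ω × Ω, μ₁ p * D p.1 p.2 := by
      rw [Fintype.sum_prod_type]
      calc ∑ a, ∑ c, ∑ b, μ₁ (a, b) * D a b * (μ₂ (b, c) * (μb b)⁻¹)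
          = ∑ a, ∑ b, μ₁ (a, b) * D a b * ((∑ c, μ₂ (b, c)) * (μb b)⁻¹) := by
            refine Finset.sum_congr rfl fun a _ => ?_
            rw [Finset.sum_comm]
            refine Finset.sum_congr rfl fun b _ => ?_
            simp only [Finset.sum_mul, Finset.mul_sum]
        _ = ∑ a, ∑ b, μ₁ (a, b) * D a b :=
            Finset.sum_congr rfl fun a _ => key1 a (D a)
        _ = ∑ p : Ω × Ω, μ₁ p * D p.1 p.2 := by rw [Fintype.sum_prod_type]
    have hT2 : ∑ p : Ω × Ω, ∑ b, μ₂ (b, p.2) * D b p.2 * (μ₁ (p.1, b) * (μb b)⁻¹)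
        = ∑ p : Ω × Ω, μ₂ p * D p.1 p.2 := by
      rw [Fintype.sum_prod_type_right]
      calc ∑ c, ∑ a, ∑ b, μ₂ (b, c) * D b c * (μ₁ (a, b) * (μb b)⁻¹)
          = ∑ c, ∑ b, μ₂ (b, c) * D b c * ((∑ a, μ₁ (a, b)) * (μb b)⁻¹) := by
            refine Finset.sum_congr rfl fun c _ => ?_
            rw [Finset.sum_comm]
            refine Finset.sum_congr rfl fun b _ => ?_
            simp only [Finset.sum_mul, Finset.mul_sum]
        _ = ∑ c, ∑ b, μ₂ (b, c) * D b c :=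
            Finset.sum_congr rfl fun c _ => key2 c (fun b => D b c)
        _ = ∑ p : Ω × Ω, μ₂ p * D p.1 p.2 := by rw [Fintype.sum_prod_type_right]
    calc ∑ p : Ω × Ω, (∑ b, μ₁ (p.1, b) * μ₂ (b, p.2) * (μb b)⁻¹) * D p.1 p.2
        ≤ ∑ p : Ω × Ω, ∑ b, μ₁ (p.1, b) * μ₂ (b, p.2) * (μb b)⁻¹ * (D p.1 b + D b p.2) := by
          refine Finset.sum_le_sum fun p _ => ?_
          rw [Finset.sum_mul]
          exact Finset.sum_le_sum fun b _ => mul_le_mul_right (hD p.1 b p.2) _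
      _ = (∑ p : Ω × Ω, ∑ b, μ₁ (p.1, b) * D p.1 b * (μ₂ (b, p.2) * (μb b)⁻¹))
          + ∑ p : Ω × Ω, ∑ b, μ₂ (b, p.2) * D b p.2 * (μ₁ (p.1, b) * (μb b)⁻¹) := by
          rw [← Finset.sum_add_distrib]
          refine Finset.sum_congr rfl fun p _ => ?_
          rw [← Finset.sum_add_distrib]
          refine Finset.sum_congr rfl fun b _ => ?_
          rw [mul_add]; ring
      _ = (∑ p : Ω × Ω, μ₁ p * D p.1 p.2) + ∑ p : Ω × Ω, μ₂ p * D p.1 p.2 := by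
          rw [hT1, hT2]

/-- Path gluing step of path coupling: if adjacent states can be coupled with expected distance
at most `β`, then arbitrary states `s, s'` can be coupled with expected distance at most
`β * d s s'`. -/
theorem path_coupling_glue {Ω : Type*} [Fintype Ω] [Nonempty Ω]
    (d : Ω → Ω → ℕ)
    (hd0 : ∀ s s', d s s' = 0 ↔ s = s')
    (hdsymm : ∀ s s', d s s' = d s' s)
    (hdtri : ∀ s s' s'', d s s'' ≤ d s s' + d s' s'')
    (hpath : ∀ s s', 1 < d s s' →
      ∃ s'', s'' ≠ s ∧ s'' ≠ s' ∧ d s s' = d s s'' + d s'' s')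
    (f : Ω → PMF Ω) (β : ℝ) (hβ : 0 ≤ β)
    (hcouple : ∀ s s', d s s' = 1 →
      ∃ μ : PMF (Ω × Ω), IsCoupling μ (f s) (f s') ∧
        ∑' p : Ω × Ω, μ p * (d p.1 p.2 : ℝ≥0∞) ≤ ENNReal.ofReal β) :
    ∀ s s' : Ω,
      ∃ μ : PMF (Ω × Ω), IsCoupling μ (f s) (f s') ∧
        ∑' p : Ω × Ω, μ p * (d p.1 p.2 : ℝ≥0∞) ≤ ENNReal.ofReal (β * d s s') := by
  suffices H : ∀ n : ℕ, ∀ s s' : Ω, d s s' = n →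
      ∃ μ : PMF (Ω × Ω), IsCoupling μ (f s) (f s') ∧
        ∑' p : Ω × Ω, μ p * (d p.1 p.2 : ℝ≥0∞) ≤ ENNReal.ofReal (β * n) by
    intro s s'
    exact H (d s s') s s' rfl
  intro n
  induction n using Nat.strong_induction_on with
  | _ n ih =>
    match n with
    | 0 =>
      intro s s' h
      have hss : s = s' := (hd0 s s').mp h
      subst hss
      refine ⟨(f s).map (fun r => (r, r)), ⟨?_, ?_⟩, ?_⟩
      · rw [PMF.map_comp]; exact PMF.map_id (f s)
      · rw [PMF.map_comp]; exact PMF.map_id (f s)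
      · have hz : ∀ p : Ω × Ω, ((f s).map (fun r => (r, r))) p * (d p.1 p.2 : ℝ≥0∞) = 0 := by
          rintro ⟨a, b⟩
          by_cases hab : a = b
          · subst hab
            have : d a a = 0 := (hd0 a a).mpr rfl
            simp [this]
          · have : ((f s).map (fun r => (r, r))) (a, b) = 0 := by
              rw [PMF.map_apply, ENNReal.tsum_eq_zero]
              intro r
              rw [if_neg]
              intro h
              rw [Prod.mk.injEq] at h
              exact hab (h.1.trans h.2.symm)
            simp [this]
        rw [tsum_congr hz]
        simp
    | 1 =>
      intro s s' h
      obtain ⟨μ, hc, hb⟩ := hcouple s s' h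
      exact ⟨μ, hc, by simpa using hb⟩
    | (k + 2) =>
      intro s s' h
      obtain ⟨t, ht1, ht2, ht3⟩ := hpath s s' (by omega)
      have hn1 : d s t ≠ 0 := fun h0 => ht1 ((hd0 s t).mp h0).symm
      have hn2 : d t s' ≠ 0 := fun h0 => ht2 ((hd0 t s').mp h0)
      have hlt1 : d s t < k + 2 := by omega
      have hlt2 : d t s' < k + 2 := by omega
      obtain ⟨μ₁, hc1, hb1⟩ := ih (d s t) hlt1 s t rfl
      obtain ⟨μ₂, hc2, hb2⟩ := ih (d t s') hlt2 t s' rfl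
      obtain ⟨μ, hc, hb⟩ := glue_coupling (f s) (f t) (f s') μ₁ μ₂ hc1 hc2
        (fun a b => (d a b : ℝ≥0∞)) (fun a b c => by exact_mod_cast hdtri a b c)
      refine ⟨μ, hc, hb.trans ?_⟩
      calc (∑' p : Ω × Ω, μ₁ p * (d p.1 p.2 : ℝ≥0∞))
            + ∑' p : Ω × Ω, μ₂ p * (d p.1 p.2 : ℝ≥0∞)
          ≤ ENNReal.ofReal (β * d s t) + ENNReal.ofReal (β * d t s') := add_le_add hb1 hb2
        _ = ENNReal.ofReal (β * d s t + β * d t s') := by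
            rw [ENNReal.ofReal_add (by positivity) (by positivity)]
        _ = ENNReal.ofReal (β * (k + 2 : ℕ)) := by
            congr 1
            rw [← mul_add]
            congr 1
            have : d s t + d t s' = k + 2 := by omega
            exact_mod_cast congrArg (Nat.cast : ℕ → ℝ) this
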